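/- arXiv:2309.04819 — 2 statements merged into one kernel-verified Lean document; each statement's English description precedes it below -/
import Mathlib

section
/- Let A = (E, {M_k}_{k∈O}) be a quantum algorithm on a d-dimensional space, ε ≥ 0, δ ≥ 0, and 0 ≤ η ≤ 1. Suppose S ⊆ O satisfies δ < δ_S := η·λ_max(M_S) − (e^ε + η − 1)·λ_min(M_S), where M_S = ∑_{k∈S} E†(M_k). Let |ψ⟩ and |φ⟩ be unit eigenvectors of M_S for the eigenvalues λ_max(M_S) and λ_min(M_S), respectively, and set γ = η|ψ⟩⟨ψ| + (1−η)|φ⟩⟨φ| and Φ = |φ⟩⟨φ|. Then γ and Φ are density matrices with D(γ,Φ) ≤ η and ∑_{k∈S} tr(M_k E(γ)) > e^ε · ∑_{k∈S} tr(M_k E(Φ)) + δ; that is, (γ,Φ) is an (ε,δ)-differential privacy counterexample of A within η. -/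
open Matrix BigOperators
open scoped ComplexOrder

namespace QDP

variable {n : Type*} [Fintype n] [DecidableEq n]

/-- Trace distance `D(ρ,σ) = (1/2) tr |ρ - σ|`, where `|A| = sqrt (Aᴴ A)`. -/
noncomputable def traceDist (ρ σ : Matrix n n ℂ) : ℝ :=
  (1 / 2 : ℝ) * (((Matrix.posSemidef_conjTranspose_mul_self (ρ - σ)).1.eigenvectorUnitary.1 *
    diagonal ((fun x : ℝ => (x : ℂ)) ∘ (√·) ∘ (Matrix.posSemidef_conjTranspose_mul_self (ρ - σ)).1.eigenvalues) *
    (star (Matrix.posSemidef_conjTranspose_mul_self (ρ - σ)).1.eigenvectorUnitary :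
      Matrix n n ℂ)).trace).re

/-- A density matrix: positive semidefinite with trace one. -/
def IsDensity (ρ : Matrix n n ℂ) : Prop := ρ.PosSemidef ∧ ρ.trace = 1

/-- The largest eigenvalue of a (Hermitian) matrix. -/
noncomputable def lamMax (M : Matrix n n ℂ) : ℝ :=
  if h : M.IsHermitian then ⨆ i, h.eigenvalues i else 0

/-- The smallest eigenvalue of a (Hermitian) matrix. -/
noncomputable def lamMin (M : Matrix n n ℂ) : ℝ :=
  if h : M.IsHermitian then ⨅ i, h.eigenvalues i else 0

/-- Application of a quantum channel given by Kraus matrices. -/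
noncomputable def applyChan {ι : Type*} [Fintype ι] (E : ι → Matrix n n ℂ)
    (ρ : Matrix n n ℂ) : Matrix n n ℂ := ∑ j, E j * ρ * (E j)ᴴ

/-- The dual of a quantum channel given by Kraus matrices. -/
noncomputable def dualChan {ι : Type*} [Fintype ι] (E : ι → Matrix n n ℂ)
    (M : Matrix n n ℂ) : Matrix n n ℂ := ∑ j, (E j)ᴴ * M * E j

/-- `(ε,δ)`-differential privacy within `η` of the quantum algorithm `(E, M)`. -/
def IsDP {ι : Type*} [Fintype ι] {O : Type*} [Fintype O]
    (E : ι → Matrix n n ℂ) (M : O → Matrix n n ℂ) (ε δ η : ℝ) : Prop :=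
  ∀ ρ σ : Matrix n n ℂ, IsDensity ρ → IsDensity σ → traceDist ρ σ ≤ η →
    ∀ S : Finset O,
      (∑ k ∈ S, (M k * applyChan E ρ).trace).re ≤
        Real.exp ε * (∑ k ∈ S, (M k * applyChan E σ).trace).re + δ

/-- Rank-one projection `|ψ⟩⟨ψ|`. -/
noncomputable def proj (ψ : n → ℂ) : Matrix n n ℂ := vecMulVec ψ (star ψ)

end QDP

namespace QDPAux

open QDP

variable {n : Type*} [Fintype n] [DecidableEq n]

lemma proj_isHermitian (v : n → ℂ) : (proj v).IsHermitian := by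
  ext i j
  simp [proj, vecMulVec_apply, Matrix.conjTranspose_apply, mul_comm]

lemma proj_mulVec (v x : n → ℂ) : proj v *ᵥ x = (star v ⬝ᵥ x) • v := by
  ext i
  simp only [proj, Matrix.mulVec, Matrix.vecMulVec_apply, dotProduct, Pi.smul_apply,
    smul_eq_mul, Finset.sum_mul]
  exact Finset.sum_congr rfl fun j _ => by ring

lemma proj_posSemidef (v : n → ℂ) : (proj v).PosSemidef := by
  refine Matrix.PosSemidef.of_dotProduct_mulVec_nonneg (proj_isHermitian v) fun x => ?_
  rw [proj_mulVec, dotProduct_smul]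
  have hx : star x ⬝ᵥ v = star (star v ⬝ᵥ x) := by
    simp [dotProduct, mul_comm]
  rw [smul_eq_mul, hx, mul_comm]
  exact star_mul_self_nonneg _

lemma proj_trace (v : n → ℂ) : (proj v).trace = star v ⬝ᵥ v := by
  simp [proj, Matrix.trace, Matrix.diag, vecMulVec_apply, dotProduct, mul_comm]

lemma smul_posSemidef {c : ℝ} (hc : 0 ≤ c) {A : Matrix n n ℂ} (hA : A.PosSemidef) :
    ((c : ℂ) • A).PosSemidef := by
  refine Matrix.PosSemidef.of_dotProduct_mulVec_nonneg ?_ fun x => ?_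
  · unfold Matrix.IsHermitian
    rw [Matrix.conjTranspose_smul, hA.1]
    congr 1
    simp
  · rw [Matrix.smul_mulVec, dotProduct_smul, smul_eq_mul]
    exact mul_nonneg (Complex.zero_le_real.mpr hc) (hA.dotProduct_mulVec_nonneg x)

lemma sum_posSemidef {ι : Type*} (s : Finset ι) (f : ι → Matrix n n ℂ)
    (h : ∀ i ∈ s, (f i).PosSemidef) : (∑ i ∈ s, f i).PosSemidef := by
  classical
  induction s using Finset.induction_on with
  | empty => simpa using Matrix.PosSemidef.zero
  | insert _ _ hni ih =>
    rw [Finset.sum_insert hni]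
    exact (h _ (Finset.mem_insert_self _ _)).add
      (ih fun i hi => h i (Finset.mem_insert_of_mem hi))

lemma vecMulVec_mul_vecMulVec (a b c e : n → ℂ) :
    Matrix.vecMulVec a b * Matrix.vecMulVec c e = (b ⬝ᵥ c) • Matrix.vecMulVec a e := by
  ext i j
  simp only [Matrix.mul_apply, Matrix.vecMulVec_apply, Matrix.smul_apply, dotProduct,
    smul_eq_mul, Finset.sum_mul]
  exact Finset.sum_congr rfl fun k _ => by ring

lemma trace_mul_proj (M : Matrix n n ℂ) (v : n → ℂ) :
    (M * proj v).trace = star v ⬝ᵥ (M *ᵥ v) := by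
  simp only [proj, Matrix.trace, Matrix.diag, Matrix.mul_apply, Matrix.vecMulVec_apply,
    dotProduct, Matrix.mulVec, Finset.mul_sum]
  exact Finset.sum_congr rfl fun i _ => Finset.sum_congr rfl fun j _ => by ring

lemma trace_chan {ι O : Type*} [Fintype ι] [Fintype O] (E : ι → Matrix n n ℂ)
    (M : O → Matrix n n ℂ) (S : Finset O) (ρ : Matrix n n ℂ) :
    ∑ k ∈ S, (M k * applyChan E ρ).trace = ((∑ k ∈ S, dualChan E (M k)) * ρ).trace := by
  rw [Finset.sum_mul, Matrix.trace_sum]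
  refine Finset.sum_congr rfl fun k _ => ?_
  rw [applyChan, dualChan, Finset.mul_sum, Finset.sum_mul, Matrix.trace_sum,
    Matrix.trace_sum]
  refine Finset.sum_congr rfl fun j _ => ?_
  rw [show M k * (E j * ρ * (E j)ᴴ) = M k * (E j * ρ) * (E j)ᴴ from (mul_assoc _ _ _).symm,
    Matrix.trace_mul_cycle, mul_assoc ((E j)ᴴ) (M k) (E j * ρ), ← mul_assoc (M k) (E j) ρ,
    ← mul_assoc ((E j)ᴴ) (M k * E j) ρ, ← mul_assoc ((E j)ᴴ) (M k) (E j)]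

end QDPAux

open QDP QDPAux in
/-- Theorem (counterexamples): if `δ < δ_S` for some subset `S` of outcomes, then the pair
`(γ, Φ)` built from extremal eigenvectors of `M_S` is an `(ε,δ)`-differential privacy
counterexample within `η`. -/
theorem dp_counterexample {d : ℕ} (hd : 1 ≤ d) {ι O : Type} [Fintype ι] [Fintype O]
    (E : ι → Matrix (Fin d) (Fin d) ℂ) (hE : ∑ j, (E j)ᴴ * E j = 1)
    (M : O → Matrix (Fin d) (Fin d) ℂ) (hMpos : ∀ k, (M k).PosSemidef)
    (hMsum : ∑ k, M k = 1)
    (ε δ η : ℝ) (hε : 0 ≤ ε) (hδ : 0 ≤ δ) (hη0 : 0 ≤ η) (hη1 : η ≤ 1)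
    (S : Finset O)
    (hδS : δ < η * lamMax (∑ k ∈ S, dualChan E (M k)) -
        (Real.exp ε + η - 1) * lamMin (∑ k ∈ S, dualChan E (M k)))
    (ψ φ : Fin d → ℂ) (hψ : star ψ ⬝ᵥ ψ = 1) (hφ : star φ ⬝ᵥ φ = 1)
    (hψe : (∑ k ∈ S, dualChan E (M k)) *ᵥ ψ =
        ((lamMax (∑ k ∈ S, dualChan E (M k)) : ℝ) : ℂ) • ψ)
    (hφe : (∑ k ∈ S, dualChan E (M k)) *ᵥ φ =
        ((lamMin (∑ k ∈ S, dualChan E (M k)) : ℝ) : ℂ) • φ) :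
    IsDensity ((η : ℂ) • proj ψ + ((1 - η : ℝ) : ℂ) • proj φ) ∧
    IsDensity (proj φ) ∧
    traceDist ((η : ℂ) • proj ψ + ((1 - η : ℝ) : ℂ) • proj φ) (proj φ) ≤ η ∧
    (∑ k ∈ S, (M k * applyChan E ((η : ℂ) • proj ψ + ((1 - η : ℝ) : ℂ) • proj φ)).trace).re >
      Real.exp ε * (∑ k ∈ S, (M k * applyChan E (proj φ)).trace).re + δ := by
  set N : Matrix (Fin d) (Fin d) ℂ := ∑ k ∈ S, dualChan E (M k) with hN
  set a : ℝ := lamMax N with ha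
  set b : ℝ := lamMin N with hb
  set P : Matrix (Fin d) (Fin d) ℂ := proj ψ with hP
  set Q : Matrix (Fin d) (Fin d) ℂ := proj φ with hQ
  -- basic facts
  have hNpsd : N.PosSemidef := by
    refine sum_posSemidef S _ fun k _ => sum_posSemidef Finset.univ _ fun j _ => ?_
    exact (hMpos k).conjTranspose_mul_mul_same (E j)
  -- b ≥ 0
  have hb0 : (0 : ℝ) ≤ b := by
    have := hNpsd.dotProduct_mulVec_nonneg φ
    rw [hφe, dotProduct_smul, smul_eq_mul, hφ, mul_one] at this
    exact Complex.zero_le_real.mp this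
  -- e^ε ≥ 1
  have hexp : (1 : ℝ) ≤ Real.exp ε := Real.one_le_exp hε
  -- orthogonality
  have hortho : star ψ ⬝ᵥ φ = 0 := by
    have h1 : star ψ ⬝ᵥ (N *ᵥ φ) = (b : ℂ) * (star ψ ⬝ᵥ φ) := by
      rw [hφe, dotProduct_smul, smul_eq_mul]
    have h2 : star ψ ⬝ᵥ (N *ᵥ φ) = (a : ℂ) * (star ψ ⬝ᵥ φ) := by
      rw [dotProduct_mulVec]
      have hvm : (star ψ) ᵥ* N = (a : ℂ) • star ψ := by
        calc star ψ ᵥ* N = star ψ ᵥ* Nᴴ := by rw [hNpsd.1]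
          _ = star (N *ᵥ ψ) := (Matrix.star_mulVec N ψ).symm
          _ = star ((a : ℂ) • ψ) := by rw [hψe]
          _ = (a : ℂ) • star ψ := by ext i; simp
      rw [hvm, smul_dotProduct, smul_eq_mul]
    have hab : a ≠ b := by
      intro hab
      rw [hab] at hδS
      nlinarith
    have := h2.symm.trans h1
    have h3 : ((a : ℂ) - (b : ℂ)) * (star ψ ⬝ᵥ φ) = 0 := by ring_nf; linear_combination this
    rcases mul_eq_zero.mp h3 with h | h
    · exfalso
      apply hab
      have : ((a - b : ℝ) : ℂ) = 0 := by push_cast; linear_combination h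
      have := Complex.ofReal_eq_zero.mp this
      linarith
    · exact h
  have hortho' : star φ ⬝ᵥ ψ = 0 := by
    have := congrArg star hortho
    rwa [star_dotProduct, star_star, star_zero] at this
  -- products of projections
  have hPP : P * P = P := by
    rw [hP, proj, QDPAux.vecMulVec_mul_vecMulVec, hψ, one_smul]
  have hQQ : Q * Q = Q := by
    rw [hQ, proj, QDPAux.vecMulVec_mul_vecMulVec, hφ, one_smul]
  have hPQ : P * Q = 0 := by
    rw [hP, hQ, proj, proj, QDPAux.vecMulVec_mul_vecMulVec, hortho, zero_smul]
  have hQP : Q * P = 0 := by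
    rw [hP, hQ, proj, proj, QDPAux.vecMulVec_mul_vecMulVec, hortho', zero_smul]
  have hPtr : P.trace = 1 := by rw [hP, proj_trace, hψ]
  have hQtr : Q.trace = 1 := by rw [hQ, proj_trace, hφ]
  -- densities
  have hγdens : IsDensity ((η : ℂ) • P + ((1 - η : ℝ) : ℂ) • Q) := by
    constructor
    · exact (smul_posSemidef hη0 (proj_posSemidef ψ)).add
        (smul_posSemidef (by linarith) (proj_posSemidef φ))
    · rw [Matrix.trace_add, Matrix.trace_smul, Matrix.trace_smul, hPtr, hQtr]
      simp only [smul_eq_mul, mul_one]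
      push_cast
      ring
  have hΦdens : IsDensity Q := ⟨proj_posSemidef φ, hQtr⟩
  refine ⟨hγdens, hΦdens, ?_, ?_⟩
  -- trace distance
  · set γ : Matrix (Fin d) (Fin d) ℂ := (η : ℂ) • P + ((1 - η : ℝ) : ℂ) • Q with hγ
    have hdiff : γ - Q = (η : ℂ) • (P - Q) := by
      rw [hγ]
      push_cast
      module
    have hB : ((η : ℂ) • (P + Q)).PosSemidef :=
      smul_posSemidef hη0 ((proj_posSemidef ψ).add (proj_posSemidef φ))
    have hsq : ((η : ℂ) • (P + Q)) ^ 2 = (γ - Q)ᴴ * (γ - Q) := by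
      rw [hdiff, Matrix.conjTranspose_smul, Matrix.conjTranspose_sub,
        (proj_isHermitian ψ : Pᴴ = P), (proj_isHermitian φ : Qᴴ = Q)]
      have hstar : star ((η : ℂ)) = (η : ℂ) := by simp
      rw [hstar, Matrix.smul_mul, Matrix.mul_smul, pow_two, Matrix.smul_mul, Matrix.mul_smul]
      congr 1
      congr 1
      rw [Matrix.sub_mul, Matrix.mul_sub, Matrix.mul_sub, Matrix.add_mul, Matrix.mul_add,
        Matrix.mul_add, hPP, hQQ, hPQ, hQP]
      abel
    have hsqrt : ((Matrix.posSemidef_conjTranspose_mul_self (γ - Q)).1.eigenvectorUnitary.1 *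
        diagonal ((fun x : ℝ => (x : ℂ)) ∘ (√·) ∘
          (Matrix.posSemidef_conjTranspose_mul_self (γ - Q)).1.eigenvalues) *
        (star (Matrix.posSemidef_conjTranspose_mul_self (γ - Q)).1.eigenvectorUnitary :
          Matrix (Fin d) (Fin d) ℂ)) = (η : ℂ) • (P + Q) := by
      have hH := (Matrix.posSemidef_conjTranspose_mul_self (γ - Q)).1
      have h1 : hH.cfc Real.sqrt = (η : ℂ) • (P + Q) := by
        calc hH.cfc Real.sqrt = cfc Real.sqrt ((γ - Q)ᴴ * (γ - Q)) := (hH.cfc_eq _).symm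
          _ = cfc Real.sqrt (((η : ℂ) • (P + Q)) ^ 2) := by rw [hsq]
          _ = cfc (fun x => Real.sqrt (x ^ 2)) ((η : ℂ) • (P + Q)) :=
              (cfc_comp_pow _ _ _ (ha := hB.1.isSelfAdjoint)).symm
          _ = cfc (id : ℝ → ℝ) ((η : ℂ) • (P + Q)) := cfc_congr fun x hx => by
              rw [hB.1.spectrum_real_eq_range_eigenvalues] at hx
              obtain ⟨i, rfl⟩ := hx
              exact Real.sqrt_sq (hB.eigenvalues_nonneg i)
          _ = _ := cfc_id ℝ _ (ha := hB.1.isSelfAdjoint)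
      rw [← h1, IsHermitian.cfc, Unitary.conjStarAlgAut_apply]
      rfl
    rw [traceDist, hsqrt, Matrix.trace_smul, Matrix.trace_add, hPtr, hQtr]
    simp
    linarith
  -- the inequality
  · have hgen : ∀ ρ, ∑ k ∈ S, (M k * applyChan E ρ).trace = (N * ρ).trace :=
      fun ρ => trace_chan E M S ρ
    have hNP : (N * P).trace = (a : ℂ) := by
      rw [hP, trace_mul_proj, hψe, dotProduct_smul, smul_eq_mul, hψ, mul_one]
    have hNQ : (N * Q).trace = (b : ℂ) := by
      rw [hQ, trace_mul_proj, hφe, dotProduct_smul, smul_eq_mul, hφ, mul_one]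
    have hLHS : (∑ k ∈ S, (M k * applyChan E ((η : ℂ) • P + ((1 - η : ℝ) : ℂ) • Q)).trace).re
        = η * a + (1 - η) * b := by
      rw [hgen, Matrix.mul_add, Matrix.mul_smul, Matrix.mul_smul, Matrix.trace_add,
        Matrix.trace_smul, Matrix.trace_smul, hNP, hNQ]
      push_cast
      simp
    have hRHS : (∑ k ∈ S, (M k * applyChan E Q).trace).re = b := by
      rw [hgen, hNQ]
      simp
    rw [hLHS, hRHS]
    nlinarith
end

section
/- For θ ∈ ℝ let Rx(θ) be the 2×2 unitary matrix with rows (cos(θ/2), −i·sin(θ/2)) and (−i·sin(θ/2), cos(θ/2)). Let v, w ∈ ℝ^n agree in all coordinates except the j-th, and let |v⟩ = Rx(v_1)|0⟩ ⊗ ⋯ ⊗ Rx(v_n)|0⟩ and |w⟩ = Rx(w_1)|0⟩ ⊗ ⋯ ⊗ Rx(w_n)|0⟩ be the angle-encoded pure states (Kronecker products of 2-dimensional vectors), with ρ = |v⟩⟨v| and σ = |w⟩⟨w|. Then the trace distance satisfies D(ρ,σ) = |sin((v_j − w_j)/2)|. -/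
open Matrix BigOperators
open scoped ComplexOrder

namespace QDP

/-- The rotation gate `Rx(θ)` about the x-axis. -/
noncomputable def Rx (θ : ℝ) : Matrix (Fin 2) (Fin 2) ℂ :=
  !![((Real.cos (θ / 2) : ℝ) : ℂ), -Complex.I * ((Real.sin (θ / 2) : ℝ) : ℂ);
     -Complex.I * ((Real.sin (θ / 2) : ℝ) : ℂ), ((Real.cos (θ / 2) : ℝ) : ℂ)]

/-- The basis state `|0⟩ ∈ ℂ²`. -/
def ket0 : Fin 2 → ℂ := fun i => if i = 0 then 1 else 0

/-- Angle encoding of a classical vector `v ∈ ℝⁿ`: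
the Kronecker product `Rx(v₁)|0⟩ ⊗ ⋯ ⊗ Rx(vₙ)|0⟩`, as a vector indexed by `Fin m → Fin 2`. -/
noncomputable def angleEncode {m : ℕ} (v : Fin m → ℝ) : (Fin m → Fin 2) → ℂ :=
  fun f => ∏ i, (Rx (v i) *ᵥ ket0) (f i)

end QDP


namespace QDP

variable {n : Type*} [Fintype n] [DecidableEq n]

omit [DecidableEq n] in
lemma vmv_mul (a b c d : n → ℂ) :
    vecMulVec a b * vecMulVec c d = (b ⬝ᵥ c) • vecMulVec a d := by
  ext i j
  simp only [mul_apply, vecMulVec_apply, Matrix.smul_apply, dotProduct, smul_eq_mul,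
    Finset.sum_mul]
  exact Finset.sum_congr rfl fun k _ => by ring

omit [DecidableEq n] in
lemma trace_vmv (a b : n → ℂ) : (vecMulVec a b).trace = a ⬝ᵥ b := by
  simp [trace, Matrix.diag, vecMulVec_apply, dotProduct]

omit [Fintype n] [DecidableEq n] in
lemma proj_conjTranspose (ψ : n → ℂ) : (proj ψ)ᴴ = proj ψ := by
  ext i j
  simp [proj, conjTranspose_apply, vecMulVec_apply, mul_comm]

open scoped MatrixOrder in
lemma traceDist_eq_of (ρ σ S : Matrix n n ℂ) (hS : S.PosSemidef)
    (h : S ^ 2 = (ρ - σ)ᴴ * (ρ - σ)) :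
    traceDist ρ σ = (1 / 2 : ℝ) * S.trace.re := by
  unfold traceDist
  have hH := (Matrix.posSemidef_conjTranspose_mul_self (ρ - σ)).1
  have e1 := hH.cfc_eq Real.sqrt
  have e2 : cfc Real.sqrt ((ρ - σ)ᴴ * (ρ - σ)) = S := by
    rw [← h, ← cfcₙ_eq_cfc (hf0 := by simp), ← CFC.sqrt_eq_real_sqrt _
      (by rw [h]; exact (posSemidef_conjTranspose_mul_self _).nonneg),
      CFC.sqrt_sq S hS.nonneg]
  rw [e2, IsHermitian.cfc, Unitary.conjStarAlgAut_apply] at e1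
  rw [e1]
  rfl

lemma traceDist_proj (ψ φ : n → ℂ) (hψ : star ψ ⬝ᵥ ψ = 1) (hφ : star φ ⬝ᵥ φ = 1)
    (c : ℝ) (hc : star ψ ⬝ᵥ φ = (c : ℂ)) (hc1 : c ^ 2 ≤ 1) :
    traceDist (proj ψ) (proj φ) = Real.sqrt (1 - c ^ 2) := by
  have hc' : star φ ⬝ᵥ ψ = (c : ℂ) := by
    have : star φ ⬝ᵥ ψ = star (star ψ ⬝ᵥ φ) := by
      simp [dotProduct, Finset.mul_sum, mul_comm]
    rw [this, hc]
    simp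
  set A : Matrix n n ℂ := proj ψ - proj φ with hA
  have hAH : Aᴴ = A := by
    simp [hA, conjTranspose_sub, proj_conjTranspose]
  have key : A * A = proj ψ + proj φ - (c : ℂ) • vecMulVec ψ (star φ)
      - (c : ℂ) • vecMulVec φ (star ψ) := by
    simp only [hA, sub_mul, mul_sub, proj, vmv_mul, hψ, hφ, hc, hc', one_smul]
    abel
  have key2 : (A * A) * (A * A) = ((1 - c ^ 2 : ℝ) : ℂ) • (A * A) := by
    rw [key]
    simp only [proj, sub_mul, mul_sub, add_mul, mul_add, smul_mul_assoc, mul_smul_comm,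
      vmv_mul, hψ, hφ, hc, hc', one_smul, smul_smul]
    push_cast
    module
  have hPSD : (A * A).PosSemidef := by
    have := Matrix.posSemidef_conjTranspose_mul_self A
    rwa [hAH] at this
  by_cases h0 : 1 - c ^ 2 = 0
  · have hAA : A * A = 0 := by
      have h4 : (A * A)ᴴ * (A * A) = 0 := by
        rw [hPSD.1.eq] at *
        rw [key2, h0]
        simp
      exact Matrix.conjTranspose_mul_self_eq_zero.mp h4
    have hA0 : A = 0 := by
      have : Aᴴ * A = 0 := by rw [hAH]; exact hAA
      exact Matrix.conjTranspose_mul_self_eq_zero.mp this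
    rw [traceDist_eq_of _ _ 0 Matrix.PosSemidef.zero (by rw [hAH]; simp [← hA, hA0])]
    simp [h0]
  · have hpos : 0 < 1 - c ^ 2 := lt_of_le_of_ne (by linarith) (Ne.symm h0)
    set l : ℝ := Real.sqrt (1 - c ^ 2) with hl
    have hl2 : l ^ 2 = 1 - c ^ 2 := Real.sq_sqrt (by linarith)
    have hlpos : 0 < l := Real.sqrt_pos.mpr hpos
    set S : Matrix n n ℂ := ((l⁻¹ : ℝ) : ℂ) • (A * A) with hS
    have hrl : (0:ℝ) ≤ l⁻¹ := by positivity
    have hSpsd : S.PosSemidef := by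
      exact hPSD.smul (by exact_mod_cast Complex.zero_le_real.mpr hrl)
    have hSsq : S ^ 2 = Aᴴ * A := by
      rw [hAH, pow_two, hS, smul_mul_assoc, mul_smul_comm, smul_smul, key2, smul_smul]
      rw [show ((l⁻¹:ℝ):ℂ) * ((l⁻¹:ℝ):ℂ) * ((1 - c ^ 2 : ℝ):ℂ) = (((l⁻¹)^2 * (1 - c^2) : ℝ) : ℂ) by push_cast; ring]
      rw [show (l⁻¹)^2 * (1 - c^2) = 1 by rw [← hl2]; field_simp]
      simp
    rw [traceDist_eq_of _ _ S hSpsd (by rw [hSsq, ← hA])]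
    have htr : (A * A).trace = ((2 * (1 - c ^ 2) : ℝ) : ℂ) := by
      rw [key]
      simp only [trace_sub, trace_add, trace_smul, proj, trace_vmv]
      rw [dotProduct_comm ψ (star ψ), dotProduct_comm φ (star φ),
        dotProduct_comm ψ (star φ), dotProduct_comm φ (star ψ), hψ, hφ, hc, hc']
      simp only [smul_eq_mul]
      push_cast
      ring
    rw [hS, trace_smul, htr, smul_eq_mul,
      show ((l⁻¹:ℝ):ℂ) * ((2 * (1 - c^2) :ℝ):ℂ) = ((l⁻¹ * (2 * (1-c^2)) : ℝ) : ℂ) by push_cast; ring,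
      Complex.ofReal_re, ← hl2]
    field_simp

lemma Rx_ket0 (θ : ℝ) : Rx θ *ᵥ ket0 =
    ![((Real.cos (θ / 2) : ℝ) : ℂ), -Complex.I * ((Real.sin (θ / 2) : ℝ) : ℂ)] := by
  funext i
  fin_cases i <;> simp [Rx, ket0, mulVec, dotProduct, Fin.sum_univ_two]

lemma overlap (θ η : ℝ) :
    ∑ x : Fin 2, (starRingEnd ℂ) ((Rx θ *ᵥ ket0) x) * (Rx η *ᵥ ket0) x
      = ((Real.cos ((θ - η) / 2) : ℝ) : ℂ) := by
  rw [show (θ - η) / 2 = θ / 2 - η / 2 by ring, Real.cos_sub]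
  simp only [Rx_ket0, Fin.sum_univ_two, Matrix.cons_val_zero, Matrix.cons_val_one,
    Matrix.head_cons, _root_.map_mul, map_neg, Complex.conj_I, Complex.conj_ofReal]
  push_cast
  ring_nf
  simp only [Complex.I_sq]
  ring

lemma angleEncode_dot {m : ℕ} (v w : Fin m → ℝ) :
    star (angleEncode v) ⬝ᵥ angleEncode w
      = ∏ i, ((Real.cos ((v i - w i) / 2) : ℝ) : ℂ) := by
  unfold angleEncode
  simp only [dotProduct, Pi.star_apply, star_prod, ← Finset.prod_mul_distrib]
  rw [← Fintype.prod_sum (fun i x => star ((Rx (v i) *ᵥ ket0) x) * (Rx (w i) *ᵥ ket0) x)]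
  exact Finset.prod_congr rfl fun i _ => overlap (v i) (w i)

end QDP

open QDP in
/-- The trace distance between angle encodings of classical vectors that agree except in
the `j`-th coordinate is `|sin((v_j - w_j)/2)|`. -/
theorem traceDist_angleEncode {m : ℕ} (v w : Fin m → ℝ) (j : Fin m)
    (hvw : ∀ i, i ≠ j → v i = w i) :
    traceDist (proj (angleEncode v)) (proj (angleEncode w)) =
      |Real.sin ((v j - w j) / 2)| := by
  set c : ℝ := Real.cos ((v j - w j) / 2) with hcdef
  have hc : star (angleEncode v) ⬝ᵥ angleEncode w = (c : ℂ) := by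
    rw [angleEncode_dot]
    rw [Finset.prod_eq_single j (fun i _ hi => by rw [hvw i hi]; simp) (by simp)]
  have hψ : star (angleEncode v) ⬝ᵥ angleEncode v = 1 := by
    rw [angleEncode_dot]; simp
  have hφ : star (angleEncode w) ⬝ᵥ angleEncode w = 1 := by
    rw [angleEncode_dot]; simp
  rw [traceDist_proj _ _ hψ hφ c hc (by
    have := Real.neg_one_le_cos ((v j - w j) / 2)
    have := Real.cos_le_one ((v j - w j) / 2)
    nlinarith)]
  rw [show 1 - c ^ 2 = Real.sin ((v j - w j) / 2) ^ 2 by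
    rw [hcdef, Real.sin_sq]]
  exact Real.sqrt_sq_eq_abs _
end
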